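/- Let A be a complete unital normed ℝ-algebra (a Banach algebra) and let X, Y, Z ∈ A. Define f, g : ℝ × ℝ → A by f(t,ε) := exp(t•X) * exp(ε•(Y + t•Z)) and g(t,ε) := exp(t•X + ε•Y + (t·ε)•(Z + (1/2)•(X*Y − Y*X))). Then f(t,ε) − g(t,ε) = O(‖(t,ε)‖³) as (t,ε) → (0,0); equivalently, the values, all first-order partial derivatives and all second-order partial derivatives of f and g at (0,0) coincide. -/

import Mathlib

open scoped Topology
open Asymptotics NormedSpace Filter

section Aux

variable {A : Type*} [NormedRing A] [NormedAlgebra ℝ A] [CompleteSpace A]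

lemma bch_exp_taylor2 :
    (fun u : A => exp u - ((1 : A) + u + (1/2 : ℝ) • (u * u))) =O[𝓝 0]
      fun u : A => ‖u‖ ^ 3 := by
  have hrad : 0 < (expSeries ℝ A).radius := by
    rw [expSeries_radius_eq_top]; exact ENNReal.zero_lt_top
  have h := (hasFPowerSeriesAt_exp_zero_of_radius_pos hrad).isBigO_sub_partialSum_pow 3
  have hps : ∀ u : A, (expSeries ℝ A).partialSum 3 u = (1 : A) + u + (1/2 : ℝ) • (u * u) := by
    intro u
    simp [FormalMultilinearSeries.partialSum, Finset.sum_range_succ, expSeries_apply_eq,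
      Nat.factorial, pow_succ]
  simpa [hps] using h

lemma bch_decomp (ea eb ec pa pb pc : A) :
    ea * eb - ec =
      (ea - pa) * eb + pa * (eb - pb) + (pa * pb - pc) + -(ec - pc) := by
  noncomm_ring

lemma bch_P_expand (a b c : A) :
    ((1:A) + a + (1/2:ℝ) • (a*a)) * ((1:A) + b + (1/2:ℝ) • (b*b))
      - ((1:A) + c + (1/2:ℝ) • (c*c))
    = ((a + b - c) + a*b + (1/2:ℝ) • (a*a + b*b - c*c))
      + (1/2:ℝ) • (a*(b*b)) + (1/2:ℝ) • ((a*a)*b) + (1/4:ℝ) • ((a*a)*(b*b)) := by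
  simp only [mul_add, add_mul, sub_mul, mul_sub, smul_mul_assoc, mul_smul_comm, smul_smul,
    smul_add, smul_sub, one_mul, mul_one]
  match_scalars <;> ring

lemma bch_key_ident (X Y Z : A) (t ε : ℝ) :
    ((t • X + ε • (Y + t • Z)
        - (t • X + ε • Y + (t*ε) • (Z + (1/2:ℝ) • (X*Y - Y*X))))
      + (t • X) * (ε • (Y + t • Z))
      + (1/2:ℝ) • ((t•X)*(t•X) + (ε • (Y + t • Z))*(ε • (Y + t • Z))
          - (t•X+ε•Y+(t*ε)•(Z+(1/2:ℝ)•(X*Y-Y*X)))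
              *(t•X+ε•Y+(t*ε)•(Z+(1/2:ℝ)•(X*Y-Y*X)))))
    = (t^2*ε) • (X*Z - (1/2:ℝ) • (X*(Z + (1/2:ℝ)•(X*Y-Y*X)) + (Z + (1/2:ℝ)•(X*Y-Y*X))*X))
      + (t*ε^2) • ((1/2:ℝ) • (Y*Z + Z*Y - Y*(Z + (1/2:ℝ)•(X*Y-Y*X)) - (Z + (1/2:ℝ)•(X*Y-Y*X))*Y))
      + (t^2*ε^2) • ((1/2:ℝ) • (Z*Z - (Z + (1/2:ℝ)•(X*Y-Y*X))*(Z + (1/2:ℝ)•(X*Y-Y*X)))) := by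
  simp only [mul_add, add_mul, sub_mul, mul_sub, smul_mul_assoc, mul_smul_comm, smul_smul,
    smul_add, smul_sub]
  match_scalars <;> ring

lemma bch_mono_bigO (i j : ℕ) (h : 3 ≤ i + j) (E : A) :
    (fun p : ℝ × ℝ => (p.1 ^ i * p.2 ^ j) • E) =O[𝓝 (0 : ℝ × ℝ)]
      fun p : ℝ × ℝ => ‖p‖ ^ 3 := by
  refine IsBigO.of_bound ‖E‖ ?_
  filter_upwards [Metric.closedBall_mem_nhds (0 : ℝ × ℝ) one_pos] with p hp
  have h1 : ‖p‖ ≤ 1 := by simpa using hp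
  have hx : |p.1| ≤ ‖p‖ := by simpa using norm_fst_le p
  have hy : |p.2| ≤ ‖p‖ := by simpa using norm_snd_le p
  have hn : ‖p.1 ^ i * p.2 ^ j‖ ≤ ‖p‖ ^ 3 := by
    calc ‖p.1 ^ i * p.2 ^ j‖ = |p.1| ^ i * |p.2| ^ j := by
          rw [Real.norm_eq_abs, abs_mul, abs_pow, abs_pow]
      _ ≤ ‖p‖ ^ i * ‖p‖ ^ j := by
          gcongr <;> positivity
      _ = ‖p‖ ^ (i + j) := (pow_add _ _ _).symm
      _ ≤ ‖p‖ ^ 3 := pow_le_pow_of_le_one (norm_nonneg _) h1 h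
  calc ‖(p.1 ^ i * p.2 ^ j) • E‖ = ‖p.1 ^ i * p.2 ^ j‖ * ‖E‖ := norm_smul _ _
    _ ≤ ‖p‖ ^ 3 * ‖E‖ := by gcongr
    _ = ‖E‖ * ‖(‖p‖ ^ 3)‖ := by rw [norm_pow, norm_norm]; ring

end Aux

/-- **First-order Baker–Campbell–Hausdorff identity in a Banach algebra.**
Let `A` be a complete unital normed `ℝ`-algebra and `X Y Z : A`.  Then
`exp (t • X) * exp (ε • (Y + t • Z))` agrees with
`exp (t • X + ε • Y + (t ε) • (Z + ½ [X, Y]))`, where `[X, Y] = X * Y − Y * X`, up to an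
error of order `O(‖(t, ε)‖³)` as `(t, ε) → (0, 0)`. -/
theorem bch_first_order
    {A : Type*} [NormedRing A] [NormedAlgebra ℝ A] [CompleteSpace A]
    (X Y Z : A) :
    (fun p : ℝ × ℝ =>
        exp (p.1 • X) * exp (p.2 • (Y + p.1 • Z))
          - exp (p.1 • X + p.2 • Y
              + (p.1 * p.2) • (Z + (1 / 2 : ℝ) • (X * Y - Y * X))))
      =O[𝓝 (0 : ℝ × ℝ)] fun p : ℝ × ℝ => ‖p‖ ^ 3 := by
  set W : A := Z + (1 / 2 : ℝ) • (X * Y - Y * X) with hW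
  set a : ℝ × ℝ → A := fun p => p.1 • X with hadef
  set b : ℝ × ℝ → A := fun p => p.2 • (Y + p.1 • Z) with hbdef
  set c : ℝ × ℝ → A := fun p => p.1 • X + p.2 • Y + (p.1 * p.2) • W with hcdef
  set P : A → A := fun u => (1 : A) + u + (1/2 : ℝ) • (u * u) with hPdef
  -- each of a, b, c is O(‖p‖) near 0
  have ha : a =O[𝓝 (0 : ℝ × ℝ)] fun p => ‖p‖ := by
    refine IsBigO.of_bound ‖X‖ (Eventually.of_forall fun p => ?_)
    have hx : |p.1| ≤ ‖p‖ := by simpa using norm_fst_le p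
    calc ‖p.1 • X‖ = |p.1| * ‖X‖ := by rw [norm_smul, Real.norm_eq_abs]
      _ ≤ ‖p‖ * ‖X‖ := by gcongr
      _ = ‖X‖ * ‖(‖p‖)‖ := by rw [norm_norm]; ring
  have hb : b =O[𝓝 (0 : ℝ × ℝ)] fun p => ‖p‖ := by
    refine IsBigO.of_bound (‖Y‖ + ‖Z‖) ?_
    filter_upwards [Metric.closedBall_mem_nhds (0 : ℝ × ℝ) one_pos] with p hp
    have h1 : ‖p‖ ≤ 1 := by simpa using hp
    have hx : |p.1| ≤ ‖p‖ := by simpa using norm_fst_le p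
    have hy : |p.2| ≤ ‖p‖ := by simpa using norm_snd_le p
    have hx1 : |p.1| ≤ 1 := hx.trans h1
    calc ‖p.2 • (Y + p.1 • Z)‖ = |p.2| * ‖Y + p.1 • Z‖ := by rw [norm_smul, Real.norm_eq_abs]
      _ ≤ |p.2| * (‖Y‖ + |p.1| * ‖Z‖) := by
          gcongr
          refine (norm_add_le _ _).trans ?_
          rw [norm_smul, Real.norm_eq_abs]
      _ ≤ ‖p‖ * (‖Y‖ + 1 * ‖Z‖) := by gcongr <;> positivity
      _ = (‖Y‖ + ‖Z‖) * ‖(‖p‖)‖ := by rw [norm_norm]; ring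
  have hc : c =O[𝓝 (0 : ℝ × ℝ)] fun p => ‖p‖ := by
    refine IsBigO.of_bound (‖X‖ + ‖Y‖ + ‖W‖) ?_
    filter_upwards [Metric.closedBall_mem_nhds (0 : ℝ × ℝ) one_pos] with p hp
    have h1 : ‖p‖ ≤ 1 := by simpa using hp
    have hx : |p.1| ≤ ‖p‖ := by simpa using norm_fst_le p
    have hy : |p.2| ≤ ‖p‖ := by simpa using norm_snd_le p
    have hy1 : |p.2| ≤ 1 := hy.trans h1
    calc ‖p.1 • X + p.2 • Y + (p.1 * p.2) • W‖
        ≤ ‖p.1 • X‖ + ‖p.2 • Y‖ + ‖(p.1 * p.2) • W‖ := norm_add₃_le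
      _ = |p.1| * ‖X‖ + |p.2| * ‖Y‖ + |p.1| * |p.2| * ‖W‖ := by
          simp [norm_smul, abs_mul, mul_assoc]
      _ ≤ ‖p‖ * ‖X‖ + ‖p‖ * ‖Y‖ + ‖p‖ * 1 * ‖W‖ := by gcongr <;> positivity
      _ = (‖X‖ + ‖Y‖ + ‖W‖) * ‖(‖p‖)‖ := by rw [norm_norm]; ring
  -- tendsto facts
  have ta : Filter.Tendsto a (𝓝 (0 : ℝ × ℝ)) (𝓝 (0 : A)) := by
    rw [hadef]
    have : Continuous fun p : ℝ × ℝ => p.1 • X := by fun_prop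
    simpa using this.tendsto' 0 0 (by simp)
  have tb : Filter.Tendsto b (𝓝 (0 : ℝ × ℝ)) (𝓝 (0 : A)) := by
    rw [hbdef]
    have : Continuous fun p : ℝ × ℝ => p.2 • (Y + p.1 • Z) := by fun_prop
    simpa using this.tendsto' 0 0 (by simp)
  have tc : Filter.Tendsto c (𝓝 (0 : ℝ × ℝ)) (𝓝 (0 : A)) := by
    rw [hcdef]
    have : Continuous fun p : ℝ × ℝ => p.1 • X + p.2 • Y + (p.1 * p.2) • W := by fun_prop
    simpa using this.tendsto' 0 0 (by simp)
  -- remainders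
  have hcube : ∀ {u : ℝ × ℝ → A}, u =O[𝓝 (0 : ℝ × ℝ)] (fun p => ‖p‖) →
      (fun p => ‖u p‖ ^ 3) =O[𝓝 (0 : ℝ × ℝ)] fun p => ‖p‖ ^ 3 := fun hu =>
    hu.norm_left.pow 3
  have Ra : (fun p => exp (a p) - P (a p)) =O[𝓝 (0 : ℝ × ℝ)] fun p => ‖p‖ ^ 3 :=
    (bch_exp_taylor2.comp_tendsto ta).trans (hcube ha)
  have Rb : (fun p => exp (b p) - P (b p)) =O[𝓝 (0 : ℝ × ℝ)] fun p => ‖p‖ ^ 3 :=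
    (bch_exp_taylor2.comp_tendsto tb).trans (hcube hb)
  have Rc : (fun p => exp (c p) - P (c p)) =O[𝓝 (0 : ℝ × ℝ)] fun p => ‖p‖ ^ 3 :=
    (bch_exp_taylor2.comp_tendsto tc).trans (hcube hc)
  -- boundedness
  have Eb : (fun p => exp (b p)) =O[𝓝 (0 : ℝ × ℝ)] (fun _ => (1 : ℝ)) :=
    (((exp_analytic (𝕂 := ℝ) (0 : A)).continuousAt.tendsto).comp tb).isBigO_one ℝ
  have Pa : (fun p => P (a p)) =O[𝓝 (0 : ℝ × ℝ)] (fun _ => (1 : ℝ)) := by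
    have hcont : Continuous fun p : ℝ × ℝ => P (a p) := by
      rw [hPdef, hadef]; fun_prop
    exact (hcont.tendsto 0).isBigO_one ℝ
  -- term 3 : P(a)*P(b) - P(c)
  have T3 : (fun p => P (a p) * P (b p) - P (c p)) =O[𝓝 (0 : ℝ × ℝ)] fun p => ‖p‖ ^ 3 := by
    have heq : ∀ p : ℝ × ℝ, P (a p) * P (b p) - P (c p)
        = ((p.1^2*p.2) • (X*Z - (1/2:ℝ) • (X*W + W*X))
            + (p.1*p.2^2) • ((1/2:ℝ) • (Y*Z + Z*Y - Y*W - W*Y))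
            + (p.1^2*p.2^2) • ((1/2:ℝ) • (Z*Z - W*W)))
          + (1/2:ℝ) • (a p * (b p * b p)) + (1/2:ℝ) • ((a p * a p) * b p)
          + (1/4:ℝ) • ((a p * a p) * (b p * b p)) := by
      intro p
      rw [hPdef, bch_P_expand, hadef, hbdef, hcdef, hW]
      congr 3
      exact bch_key_ident X Y Z p.1 p.2
    have hm1 := bch_mono_bigO (A := A) 2 1 (by norm_num) (X*Z - (1/2:ℝ) • (X*W + W*X))
    have hm2 := bch_mono_bigO (A := A) 1 2 (by norm_num)
      ((1/2:ℝ) • (Y*Z + Z*Y - Y*W - W*Y))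
    have hm3 := bch_mono_bigO (A := A) 2 2 (by norm_num) ((1/2:ℝ) • (Z*Z - W*W))
    have hmul3 : (fun p : ℝ × ℝ => a p * (b p * b p)) =O[𝓝 (0 : ℝ × ℝ)]
        fun p => ‖p‖ ^ 3 := by
      have := ha.mul (hb.mul hb)
      refine this.trans (IsBigO.of_bound 1 (Eventually.of_forall fun p => ?_))
      simp [pow_succ, abs_of_nonneg, mul_assoc, norm_nonneg]
    have hmul3' : (fun p : ℝ × ℝ => (a p * a p) * b p) =O[𝓝 (0 : ℝ × ℝ)]
        fun p => ‖p‖ ^ 3 := by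
      have := (ha.mul ha).mul hb
      refine this.trans (IsBigO.of_bound 1 (Eventually.of_forall fun p => ?_))
      simp [pow_succ, abs_of_nonneg, mul_assoc, norm_nonneg]
    have hmul4 : (fun p : ℝ × ℝ => (a p * a p) * (b p * b p)) =O[𝓝 (0 : ℝ × ℝ)]
        fun p => ‖p‖ ^ 3 := by
      have h4 := (ha.mul ha).mul (hb.mul hb)
      refine h4.trans (IsBigO.of_bound 1 ?_)
      filter_upwards [Metric.closedBall_mem_nhds (0 : ℝ × ℝ) one_pos] with p hp
      have h1 : ‖p‖ ≤ 1 := by simpa using hp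
      have h0 : (0:ℝ) ≤ ‖p‖ := norm_nonneg _
      have : ‖p‖ * ‖p‖ * (‖p‖ * ‖p‖) ≤ ‖p‖ ^ 3 := by
        nlinarith [pow_nonneg h0 3]
      calc ‖‖p‖ * ‖p‖ * (‖p‖ * ‖p‖)‖ = ‖p‖ * ‖p‖ * (‖p‖ * ‖p‖) := by
            rw [Real.norm_eq_abs, abs_of_nonneg (by positivity)]
        _ ≤ ‖p‖ ^ 3 := this
        _ = 1 * ‖(‖p‖ ^ 3)‖ := by rw [Real.norm_eq_abs, abs_of_nonneg (by positivity)]; ring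
    have := ((((hm1.add hm2).add hm3).add (hmul3.const_smul_left (1/2:ℝ))).add
        (hmul3'.const_smul_left (1/2:ℝ))).add (hmul4.const_smul_left (1/4:ℝ))
    refine IsBigO.congr' ?_ (Eventually.of_forall fun p => (heq p).symm) EventuallyEq.rfl
    simpa [pow_one] using this
  -- assemble
  have hsplit : ∀ p : ℝ × ℝ,
      exp (a p) * exp (b p) - exp (c p)
        = (exp (a p) - P (a p)) * exp (b p) + P (a p) * (exp (b p) - P (b p))
          + (P (a p) * P (b p) - P (c p)) + -(exp (c p) - P (c p)) :=
    fun p => bch_decomp _ _ _ _ _ _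
  have T1 : (fun p => (exp (a p) - P (a p)) * exp (b p)) =O[𝓝 (0 : ℝ × ℝ)]
      fun p => ‖p‖ ^ 3 := by
    simpa using Ra.mul Eb
  have T2 : (fun p => P (a p) * (exp (b p) - P (b p))) =O[𝓝 (0 : ℝ × ℝ)]
      fun p => ‖p‖ ^ 3 := by
    simpa using Pa.mul Rb
  have final := ((T1.add T2).add T3).add Rc.neg_left
  refine IsBigO.congr' ?_ (Eventually.of_forall fun p => (hsplit p).symm) EventuallyEq.rfl
  exact final
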